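/- arXiv:2511.03887 — 4 statements merged into one kernel-verified Lean document; each statement's English description precedes it below -/
import Mathlib

section
/- Let G be a topological group and let G₁ ≤ G₂ ≤ ⋯ be an increasing sequence of open subgroups of G with ⋃_{n ∈ ℕ} G_n = G. If G is generated by a coarsely bounded subset S ⊆ G, then G_n = G for some n. -/
open Pointwise

/-- A continuous, left-invariant pseudometric on a topological group `G`. -/
structure IsContLeftInvPseudometric (G : Type*) [Group G] [TopologicalSpace G]
    (d : G → G → ℝ) : Prop where
  continuous : Continuous fun p : G × G => d p.1 p.2
  self : ∀ x : G, d x x = 0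
  symm : ∀ x y : G, d x y = d y x
  nonneg : ∀ x y : G, 0 ≤ d x y
  triangle : ∀ x y z : G, d x z ≤ d x y + d y z
  left_inv : ∀ g x y : G, d (g * x) (g * y) = d x y

/-- A subset `A` of a topological group `G` is coarsely bounded in `G` if it has
finite diameter with respect to every continuous left-invariant pseudometric on `G`. -/
def IsCoarselyBounded (G : Type*) [Group G] [TopologicalSpace G] (A : Set G) : Prop :=
  ∀ d : G → G → ℝ, IsContLeftInvPseudometric G d →
    ∃ M : ℝ, ∀ a ∈ A, ∀ b ∈ A, d a b ≤ M

/-- The word length of `g` with respect to a generating set `S`: the least `n` such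
that `g` is a product of `n` elements of `S`. -/
noncomputable def wordLength {G : Type*} [Group G] (S : Set G) (g : G) : ℕ :=
  sInf {n : ℕ | ∃ l : List G, l.length = n ∧ (∀ s ∈ l, s ∈ S) ∧ l.prod = g}

/-- `G` admits a geometry if there is a continuous left-invariant pseudometric on `G`
which dominates, in the coarse Lipschitz sense, every continuous left-invariant
pseudometric on `G`. -/
def AdmitsAGeometry (G : Type*) [Group G] [TopologicalSpace G] : Prop :=
  ∃ d : G → G → ℝ, IsContLeftInvPseudometric G d ∧
    ∀ d' : G → G → ℝ, IsContLeftInvPseudometric G d' →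
      ∃ L K : ℝ, 0 < L ∧ 0 ≤ K ∧ ∀ g h : G, d' g h ≤ L * d g h + K

/-- If `G` is generated by a coarsely bounded set, then any increasing chain of open
subgroups whose union is `G` stabilizes at `G`. -/
theorem eq_top_of_chain_of_cb_generated {G : Type*} [Group G] [TopologicalSpace G]
    [IsTopologicalGroup G]
    (H : ℕ → Subgroup G) (hopen : ∀ n, IsOpen (H n : Set G))
    (hmono : ∀ n, H n ≤ H (n + 1)) (hunion : ∀ g : G, ∃ n, g ∈ H n)
    (S : Set G) (hS : IsCoarselyBounded G S) (hgen : Subgroup.closure S = ⊤) :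
    ∃ n, H n = ⊤ := by
  classical
  have hmono' : Monotone H := monotone_nat_of_le_succ hmono
  set f : G → ℕ := fun g => sInf {n : ℕ | g ∈ H n} with hf
  have hne : ∀ g : G, {n : ℕ | g ∈ H n}.Nonempty := fun g => hunion g
  have hmem : ∀ g : G, g ∈ H (f g) := fun g => Nat.sInf_mem (hne g)
  have hle : ∀ g n, g ∈ H n → f g ≤ n := fun g n h => Nat.sInf_le h
  have hone : f 1 = 0 := Nat.le_zero.mp (hle 1 0 (one_mem _))
  have hinv : ∀ g : G, f g⁻¹ = f g := by
    intro g
    simp only [hf]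
    congr 1
    ext n
    simp [inv_mem_iff]
  have hmul : ∀ g h : G, f (g * h) ≤ max (f g) (f h) := fun g h =>
    hle _ _ (mul_mem (hmono' (le_max_left _ _) (hmem g))
      (hmono' (le_max_right _ _) (hmem h)))
  have hlc : IsLocallyConstant f := by
    rw [IsLocallyConstant.iff_exists_open]
    intro x
    rcases Nat.eq_zero_or_pos (f x) with h0 | hpos
    · refine ⟨(H 0 : Set G), hopen 0, by simpa [h0] using hmem x, ?_⟩
      intro y hy
      rw [Nat.le_zero.mp (hle y 0 hy), h0]
    · refine ⟨(H (f x) : Set G) \ (H (f x - 1) : Set G),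
        (hopen _).sdiff (Subgroup.isClosed_of_isOpen _ (hopen _)), ⟨hmem x, ?_⟩, ?_⟩
      · intro hx
        have := hle x _ hx
        omega
      · intro y ⟨hy1, hy2⟩
        have h1 : f y ≤ f x := hle y _ hy1
        by_contra hne'
        have h2 : f y ≤ f x - 1 := by omega
        exact hy2 (hmono' h2 (hmem y))
  set d : G → G → ℝ := fun x y => (f (x⁻¹ * y) : ℝ) with hd
  have hdps : IsContLeftInvPseudometric G d := by
    constructor
    · exact ((hlc.comp (fun n : ℕ => (n : ℝ))).comp_continuous
        (continuous_fst.inv.mul continuous_snd)).continuous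
    · intro x; simp [hd, hone]
    · intro x y
      show (f (x⁻¹ * y) : ℝ) = (f (y⁻¹ * x) : ℝ)
      have h : (y⁻¹ * x) = (x⁻¹ * y)⁻¹ := by group
      rw [h, hinv]
    · intro x y; simp [hd]
    · intro x y z
      have hxz : x⁻¹ * z = (x⁻¹ * y) * (y⁻¹ * z) := by group
      have := hmul (x⁻¹ * y) (y⁻¹ * z)
      rw [← hxz] at this
      have : f (x⁻¹ * z) ≤ f (x⁻¹ * y) + f (y⁻¹ * z) :=
        this.trans (max_le_add_of_nonneg (Nat.zero_le _) (Nat.zero_le _))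
      simpa [hd] using (by exact_mod_cast this : (f (x⁻¹ * z) : ℝ) ≤ _)
    · intro g x y
      show (f ((g * x)⁻¹ * (g * y)) : ℝ) = (f (x⁻¹ * y) : ℝ)
      have h : (g * x)⁻¹ * (g * y) = x⁻¹ * y := by group
      rw [h]
  obtain ⟨M, hM⟩ := hS d hdps
  rcases Set.eq_empty_or_nonempty S with hSe | ⟨s₀, hs₀⟩
  · refine ⟨0, ?_⟩
    rw [eq_top_iff, ← hgen, hSe]
    simpa using bot_le
  · set N : ℕ := f s₀ + ⌈M⌉₊ with hN
    refine ⟨N, ?_⟩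
    rw [eq_top_iff, ← hgen, Subgroup.closure_le]
    intro s hs
    have h1 : d s₀ s ≤ M := hM s₀ hs₀ s hs
    have h2 : (f s : ℝ) ≤ (f (s₀⁻¹ * s) : ℝ) + (f s₀ : ℝ) := by
      have hh : s = s₀ * (s₀⁻¹ * s) := by group
      have := hmul s₀ (s₀⁻¹ * s)
      rw [← hh] at this
      have := this.trans (max_le_add_of_nonneg (Nat.zero_le _) (Nat.zero_le _))
      push_cast
      exact_mod_cast by linarith [(Nat.cast_le (α := ℝ)).mpr this]
    have h3 : (f s : ℝ) ≤ (N : ℝ) := by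
      have : (f (s₀⁻¹ * s) : ℝ) ≤ M := h1
      have hMc : M ≤ (⌈M⌉₊ : ℝ) := Nat.le_ceil M
      have : (f s : ℝ) ≤ (f s₀ : ℝ) + (⌈M⌉₊ : ℝ) := by linarith
      simpa [hN] using this
    have h4 : f s ≤ N := by exact_mod_cast h3
    exact hmono' h4 (hmem s)
end

section
/- For a topological group G, the following are equivalent: (1) G admits a geometry; (2) G is generated by an open, coarsely bounded subset; (3) G is generated by a coarsely bounded subset and has a coarsely bounded identity neighborhood. -/
open Pointwise

set_option linter.unusedSectionVars false
set_option linter.unusedVariables false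
set_option maxHeartbeats 1000000

namespace CBAux

section Chains

variable {G : Type*} [Group G]

/-- cost of a chain starting at `x` passing through the points of `l` in order. -/
def chainCost (c : G → G → ℝ) : G → List G → ℝ
  | _, [] => 0
  | x, y :: l => c x y + chainCost c y l

/-- last point of a chain. -/
def chainLast : G → List G → G
  | x, [] => x
  | _, y :: l => chainLast y l

@[simp] lemma chainCost_nil (c : G → G → ℝ) (x : G) : chainCost c x [] = 0 := rfl
@[simp] lemma chainCost_cons (c : G → G → ℝ) (x y : G) (l : List G) :
    chainCost c x (y :: l) = c x y + chainCost c y l := rfl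
@[simp] lemma chainLast_nil (x : G) : chainLast x ([] : List G) = x := rfl
@[simp] lemma chainLast_cons (x y : G) (l : List G) :
    chainLast x (y :: l) = chainLast y l := rfl

lemma chainCost_nonneg {c : G → G → ℝ} (hc : ∀ a b, 0 ≤ c a b) :
    ∀ (l : List G) (x : G), 0 ≤ chainCost c x l := by
  intro l
  induction l with
  | nil => intro x; simp
  | cons y l ih => intro x; simpa using add_nonneg (hc x y) (ih y)

lemma chainCost_append (c : G → G → ℝ) :
    ∀ (l₁ l₂ : List G) (x : G),
      chainCost c x (l₁ ++ l₂) = chainCost c x l₁ + chainCost c (chainLast x l₁) l₂ := by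
  intro l₁
  induction l₁ with
  | nil => intro l₂ x; simp
  | cons y l ih => intro l₂ x; simp [ih, add_assoc]

lemma chainLast_append :
    ∀ (l₁ l₂ : List G) (x : G),
      chainLast x (l₁ ++ l₂) = chainLast (chainLast x l₁) l₂ := by
  intro l₁
  induction l₁ with
  | nil => intro l₂ x; simp
  | cons y l ih => intro l₂ x; simp [ih]

lemma chainCost_mono {c₁ c₂ : G → G → ℝ} (h : ∀ a b, c₁ a b ≤ c₂ a b) :
    ∀ (l : List G) (x : G), chainCost c₁ x l ≤ chainCost c₂ x l := by
  intro l
  induction l with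
  | nil => intro x; simp
  | cons y l ih => intro x; exact add_le_add (h x y) (ih y)

/-- the set of costs of chains from `x` to `y`. -/
def costSet (c : G → G → ℝ) (x y : G) : Set ℝ :=
  {r | ∃ l : List G, chainLast x l = y ∧ chainCost c x l = r}

lemma costSet_nonempty (c : G → G → ℝ) (x y : G) : (costSet c x y).Nonempty :=
  ⟨c x y + 0, [y], rfl, rfl⟩

lemma costSet_bddBelow {c : G → G → ℝ} (hc : ∀ a b, 0 ≤ c a b) (x y : G) :
    BddBelow (costSet c x y) := by
  refine ⟨0, fun r hr => ?_⟩
  obtain ⟨l, -, rfl⟩ := hr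
  exact chainCost_nonneg hc l x

/-- chain-infimum pseudometric associated to a cost function. -/
noncomputable def dOf (c : G → G → ℝ) (x y : G) : ℝ := sInf (costSet c x y)

lemma dOf_nonneg {c : G → G → ℝ} (hc : ∀ a b, 0 ≤ c a b) (x y : G) : 0 ≤ dOf c x y :=
  le_csInf (costSet_nonempty c x y) (fun r hr => by
    obtain ⟨l, -, rfl⟩ := hr; exact chainCost_nonneg hc l x)

lemma dOf_le_chainCost {c : G → G → ℝ} (hc : ∀ a b, 0 ≤ c a b) {x y : G} {l : List G}
    (hl : chainLast x l = y) : dOf c x y ≤ chainCost c x l :=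
  csInf_le (costSet_bddBelow hc x y) ⟨l, hl, rfl⟩

lemma dOf_le {c : G → G → ℝ} (hc : ∀ a b, 0 ≤ c a b) (x y : G) : dOf c x y ≤ c x y := by
  simpa using dOf_le_chainCost hc (l := [y]) (x := x) rfl

lemma dOf_self {c : G → G → ℝ} (hc : ∀ a b, 0 ≤ c a b) (x : G) : dOf c x x = 0 :=
  le_antisymm (by simpa using dOf_le_chainCost hc (l := ([] : List G)) (x := x) rfl)
    (dOf_nonneg hc x x)

lemma dOf_triangle {c : G → G → ℝ} (hc : ∀ a b, 0 ≤ c a b) (x y z : G) :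
    dOf c x z ≤ dOf c x y + dOf c y z := by
  have key : ∀ r₁ ∈ costSet c x y, ∀ r₂ ∈ costSet c y z, dOf c x z ≤ r₁ + r₂ := by
    rintro r₁ ⟨l₁, h₁, rfl⟩ r₂ ⟨l₂, h₂, rfl⟩
    have : chainLast x (l₁ ++ l₂) = z := by rw [chainLast_append, h₁, h₂]
    calc dOf c x z ≤ chainCost c x (l₁ ++ l₂) := dOf_le_chainCost hc this
    _ = chainCost c x l₁ + chainCost c y l₂ := by rw [chainCost_append, h₁]
  have h1 : ∀ r₁ ∈ costSet c x y, dOf c x z - r₁ ≤ dOf c y z := by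
    intro r₁ hr₁
    refine le_csInf (costSet_nonempty c y z) (fun r₂ hr₂ => ?_)
    linarith [key r₁ hr₁ r₂ hr₂]
  have h2 : dOf c x z - dOf c y z ≤ dOf c x y := by
    refine le_csInf (costSet_nonempty c x y) (fun r₁ hr₁ => ?_)
    linarith [h1 r₁ hr₁]
  linarith

lemma dOf_symm {c : G → G → ℝ} (hc : ∀ a b, 0 ≤ c a b) (hs : ∀ a b, c a b = c b a)
    (x y : G) : dOf c x y = dOf c y x := by
  have rev : ∀ (l : List G) (x : G), ∃ l' : List G,
      chainLast (chainLast x l) l' = x ∧ chainCost c (chainLast x l) l' = chainCost c x l := by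
    intro l
    induction l with
    | nil => intro x; exact ⟨[], rfl, rfl⟩
    | cons y l ih =>
      intro x
      obtain ⟨l', hl', hc'⟩ := ih y
      refine ⟨l' ++ [x], ?_, ?_⟩
      · rw [chainLast_cons, chainLast_append, hl']; rfl
      · rw [chainLast_cons, chainCost_append, hl', hc']
        simp only [chainCost_cons, chainCost_nil, chainLast_cons]
        rw [hs y x]; ring
  have key : ∀ a b : G, dOf c b a ≤ dOf c a b := by
    intro a b
    refine le_csInf (costSet_nonempty c a b) ?_
    rintro r ⟨l, hl, rfl⟩
    obtain ⟨l', hl', hc'⟩ := rev l a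
    rw [hl] at hl' hc'
    exact hc' ▸ dOf_le_chainCost hc hl'
  exact le_antisymm (key y x) (key x y)

lemma dOf_left_inv {c : G → G → ℝ} (hc : ∀ a b, 0 ≤ c a b)
    (hinv : ∀ g a b, c (g * a) (g * b) = c a b) (g x y : G) :
    dOf c (g * x) (g * y) = dOf c x y := by
  have map_last : ∀ (l : List G) (x : G) (g : G),
      chainLast (g * x) (l.map (g * ·)) = g * chainLast x l := by
    intro l
    induction l with
    | nil => intro x g; simp
    | cons y l ih => intro x g; simp [ih]
  have map_cost : ∀ (l : List G) (x : G) (g : G),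
      chainCost c (g * x) (l.map (g * ·)) = chainCost c x l := by
    intro l
    induction l with
    | nil => intro x g; simp
    | cons y l ih => intro x g; simp [ih, hinv]
  have key : ∀ (g x y : G), dOf c (g * x) (g * y) ≤ dOf c x y := by
    intro g x y
    refine le_csInf (costSet_nonempty c x y) ?_
    rintro r ⟨l, hl, rfl⟩
    rw [← map_cost l x g]
    exact dOf_le_chainCost hc (by rw [map_last, hl])
  refine le_antisymm (key g x y) ?_
  have := key g⁻¹ (g * x) (g * y)
  simpa using this

lemma le_dOf {c : G → G → ℝ} (hc : ∀ a b, 0 ≤ c a b) {φ : G → G → ℝ} {A B : ℝ}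
    (hA : 0 < A)
    (h : ∀ (l : List G) (x : G), φ x (chainLast x l) ≤ A * chainCost c x l + B)
    (x y : G) : φ x y ≤ A * dOf c x y + B := by
  have : (φ x y - B) / A ≤ dOf c x y := by
    refine le_csInf (costSet_nonempty c x y) ?_
    rintro r ⟨l, hl, rfl⟩
    have hx := h l x
    rw [hl] at hx
    rw [div_le_iff₀ hA]
    nlinarith
  rw [div_le_iff₀ hA] at this
  nlinarith

lemma take_succ_of_lt {α : Type*} :
    ∀ (l : List α) (i : ℕ) (h : i < l.length),
      l.take (i + 1) = l.take i ++ [l.get ⟨i, h⟩] := by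
  intro l
  induction l with
  | nil => intro i h; simp at h
  | cons a l ih =>
    intro i h
    cases i with
    | zero => rfl
    | succ i =>
      have h' : i < l.length := by simpa using h
      show a :: l.take (i + 1) = a :: (l.take i ++ [l.get ⟨i, h'⟩])
      rw [ih i h']

end Chains

section WordLemmas

variable {G : Type*} [Group G] {T : Set G}

lemma wordSet_def (g : G) :
    wordLength T g = sInf {n : ℕ | ∃ l : List G, l.length = n ∧ (∀ s ∈ l, s ∈ T) ∧ l.prod = g} :=
  rfl

lemma word_exists (hgen : Subgroup.closure T = ⊤) (hsym : T⁻¹ = T) (g : G) :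
    ∃ l : List G, (∀ s ∈ l, s ∈ T) ∧ l.prod = g := by
  have hg : g ∈ Submonoid.closure (T ∪ T⁻¹) := by
    rw [← Subgroup.closure_toSubmonoid, Subgroup.mem_toSubmonoid, hgen]
    trivial
  rw [hsym, Set.union_self] at hg
  exact Submonoid.exists_list_of_mem_closure hg

lemma wordLength_spec (hgen : ∀ g : G, ∃ l : List G, (∀ s ∈ l, s ∈ T) ∧ l.prod = g) (g : G) :
    ∃ l : List G, l.length = wordLength T g ∧ (∀ s ∈ l, s ∈ T) ∧ l.prod = g := by
  obtain ⟨l, hl, hp⟩ := hgen g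
  have ne : {n : ℕ | ∃ l : List G, l.length = n ∧ (∀ s ∈ l, s ∈ T) ∧ l.prod = g}.Nonempty :=
    ⟨l.length, l, rfl, hl, hp⟩
  have := Nat.sInf_mem ne
  obtain ⟨l', h1, h2, h3⟩ := this
  exact ⟨l', h1, h2, h3⟩

lemma wordLength_le {g : G} {l : List G} (hl : ∀ s ∈ l, s ∈ T) (hp : l.prod = g) :
    wordLength T g ≤ l.length :=
  Nat.sInf_le ⟨l, rfl, hl, hp⟩

lemma wordLength_one (h1 : (1 : G) ∈ T) : wordLength T (1 : G) = 0 :=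
  Nat.le_zero.mp (wordLength_le (l := []) (by simp) rfl)

lemma wordLength_mul (hgen : ∀ g : G, ∃ l : List G, (∀ s ∈ l, s ∈ T) ∧ l.prod = g) (g h : G) :
    wordLength T (g * h) ≤ wordLength T g + wordLength T h := by
  obtain ⟨l₁, hlen₁, hmem₁, hp₁⟩ := wordLength_spec hgen g
  obtain ⟨l₂, hlen₂, hmem₂, hp₂⟩ := wordLength_spec hgen h
  have := wordLength_le (g := g * h) (l := l₁ ++ l₂)
    (by intro s hs; rcases List.mem_append.mp hs with h | h; exacts [hmem₁ s h, hmem₂ s h])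
    (by rw [List.prod_append, hp₁, hp₂])
  simpa [hlen₁, hlen₂] using this

lemma wordLength_mem_le_one {t : G} (ht : t ∈ T) : wordLength T t ≤ 1 :=
  wordLength_le (l := [t]) (by simpa using ht) (by simp)

lemma two_le_wordLength (hgen : ∀ g : G, ∃ l : List G, (∀ s ∈ l, s ∈ T) ∧ l.prod = g)
    (h1 : (1 : G) ∈ T) {g : G} (hg : g ∉ T) : 2 ≤ wordLength T g := by
  obtain ⟨l, hlen, hmem, hp⟩ := wordLength_spec hgen g
  rcases l with _ | ⟨t, _ | ⟨u, l⟩⟩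
  · exact absurd (hp ▸ h1) hg
  · have ht : t = g := by simpa using hp
    exact absurd (ht ▸ hmem t (by simp)) hg
  · rw [← hlen]
    simp only [List.length_cons]
    omega

end WordLemmas

section DFun

open scoped Classical

variable {G : Type*} [Group G] (V : ℕ → Set G)

/-- proto-distance from a chain of neighborhoods. -/
noncomputable def DFun (x y : G) : ℝ :=
  ⨅ n : ℕ, (if x⁻¹ * y ∈ V n then ((2 : ℝ)⁻¹) ^ n else 1)

variable {V}

lemma DFun_term_nonneg (x y : G) (n : ℕ) :
    (0 : ℝ) ≤ (if x⁻¹ * y ∈ V n then ((2 : ℝ)⁻¹) ^ n else 1) := by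
  split <;> positivity

lemma DFun_nonneg (x y : G) : 0 ≤ DFun V x y :=
  Real.iInf_nonneg (DFun_term_nonneg x y)

lemma DFun_bddBelow (x y : G) :
    BddBelow (Set.range fun n => (if x⁻¹ * y ∈ V n then ((2 : ℝ)⁻¹) ^ n else 1)) :=
  ⟨0, by rintro r ⟨n, rfl⟩; exact DFun_term_nonneg x y n⟩

lemma DFun_le_of_mem {x y : G} {n : ℕ} (h : x⁻¹ * y ∈ V n) :
    DFun V x y ≤ ((2 : ℝ)⁻¹) ^ n := by
  have := ciInf_le (DFun_bddBelow (V := V) x y) n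
  rw [if_pos h] at this
  exact this

lemma DFun_le_one (x y : G) : DFun V x y ≤ 1 := by
  have := ciInf_le (DFun_bddBelow (V := V) x y) 0
  have h0 : (if x⁻¹ * y ∈ V 0 then ((2 : ℝ)⁻¹) ^ 0 else 1) = 1 := by
    split_ifs <;> simp
  rw [h0] at this
  exact this

lemma DFun_self (hV1 : ∀ n, (1 : G) ∈ V n) (x : G) : DFun V x x = 0 := by
  refine le_antisymm ?_ (DFun_nonneg x x)
  by_contra h
  push_neg at h
  obtain ⟨n, hn⟩ := exists_pow_lt_of_lt_one h (by norm_num : ((2 : ℝ)⁻¹) < 1)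
  exact absurd (DFun_le_of_mem (by simpa using hV1 n)) (not_le.mpr hn)

lemma DFun_symm (hVsym : ∀ n, (V n)⁻¹ = V n) (x y : G) : DFun V x y = DFun V y x := by
  unfold DFun
  congr 1
  funext n
  have key : ∀ a : G, a ∈ V n → a⁻¹ ∈ V n := by
    intro a ha
    rw [← hVsym n, Set.mem_inv, inv_inv]
    exact ha
  have heq : y⁻¹ * x = (x⁻¹ * y)⁻¹ := by group
  have : y⁻¹ * x ∈ V n ↔ x⁻¹ * y ∈ V n := by
    constructor
    · intro h
      have h2 := key _ h
      rwa [heq, inv_inv] at h2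
    · intro h
      exact heq ▸ key _ h
  simp only [this]

lemma DFun_left_inv (g x y : G) : DFun V (g * x) (g * y) = DFun V x y := by
  unfold DFun
  congr 1
  funext n
  have : (g * x)⁻¹ * (g * y) = x⁻¹ * y := by group
  rw [this]

lemma V_antitone (hVdec : ∀ n, V (n + 1) ⊆ V n) : ∀ m n, m ≤ n → V n ⊆ V m := by
  intro m n h
  induction n with
  | zero => simpa [Nat.le_zero.mp h] using Set.Subset.rfl
  | succ n ih =>
    rcases Nat.lt_or_ge m (n + 1) with h' | h'
    · exact (hVdec n).trans (ih (Nat.lt_succ_iff.mp h'))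
    · have : m = n + 1 := le_antisymm h h'
      simpa [this] using Set.Subset.rfl

lemma pow_le_DFun (hVdec : ∀ n, V (n + 1) ⊆ V n) {x y : G} {n : ℕ}
    (h : x⁻¹ * y ∉ V n) : ((2 : ℝ)⁻¹) ^ n ≤ DFun V x y := by
  refine le_ciInf fun j => ?_
  split_ifs with hj
  · rcases le_or_gt j n with hjn | hjn
    · exact pow_le_pow_of_le_one (by norm_num) (by norm_num) hjn
    · exact absurd (V_antitone hVdec n j hjn.le hj) h
  · exact pow_le_one₀ (by norm_num) (by norm_num)

lemma DFun_lt_mem (hVdec : ∀ n, V (n + 1) ⊆ V n) {x y : G} {n : ℕ}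
    (h : DFun V x y < ((2 : ℝ)⁻¹) ^ n) : x⁻¹ * y ∈ V (n + 1) := by
  obtain ⟨j, hj⟩ := exists_lt_of_ciInf_lt h
  split_ifs at hj with hmem
  · have hnj : n < j := by
      by_contra hc
      push_neg at hc
      exact absurd (pow_le_pow_of_le_one (by norm_num : (0:ℝ) ≤ 2⁻¹) (by norm_num) hc) (not_le.mpr hj)
    exact V_antitone hVdec (n + 1) j hnj hmem
  · have : ((2 : ℝ)⁻¹) ^ n ≤ 1 := pow_le_one₀ (by norm_num) (by norm_num)
    linarith

lemma DFun_triple (hV1 : ∀ n, (1 : G) ∈ V n) (hVdec : ∀ n, V (n + 1) ⊆ V n)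
    (hVmul : ∀ n, V (n + 1) * V (n + 1) * V (n + 1) ⊆ V n) (x y z w : G) :
    DFun V x w ≤ 2 * max (DFun V x y) (max (DFun V y z) (DFun V z w)) := by
  set m := max (DFun V x y) (max (DFun V y z) (DFun V z w)) with hm
  have hm0 : 0 ≤ m := le_trans (DFun_nonneg x y) (le_max_left _ _)
  have hxy : DFun V x y ≤ m := le_max_left _ _
  have hyz : DFun V y z ≤ m := le_trans (le_max_left _ _) (le_max_right _ _)
  have hzw : DFun V z w ≤ m := le_trans (le_max_right _ _) (le_max_right _ _)
  have key : ∀ k : ℕ, m < ((2 : ℝ)⁻¹) ^ k → DFun V x w ≤ ((2 : ℝ)⁻¹) ^ k := by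
    intro k hk
    have h1 : x⁻¹ * y ∈ V (k + 1) := DFun_lt_mem hVdec (lt_of_le_of_lt hxy hk)
    have h2 : y⁻¹ * z ∈ V (k + 1) := DFun_lt_mem hVdec (lt_of_le_of_lt hyz hk)
    have h3 : z⁻¹ * w ∈ V (k + 1) := DFun_lt_mem hVdec (lt_of_le_of_lt hzw hk)
    have : x⁻¹ * w ∈ V k := by
      have : (x⁻¹ * y) * (y⁻¹ * z) * (z⁻¹ * w) ∈ V k :=
        hVmul k (Set.mul_mem_mul (Set.mul_mem_mul h1 h2) h3)
      simpa [mul_assoc] using this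
    exact DFun_le_of_mem this
  rcases eq_or_lt_of_le hm0 with hm0' | hm0'
  · -- m = 0
    have : DFun V x w ≤ 0 := by
      by_contra h
      push_neg at h
      obtain ⟨k, hk⟩ := exists_pow_lt_of_lt_one h (by norm_num : ((2:ℝ)⁻¹) < 1)
      have := key k (by rw [← hm0']; positivity)
      linarith
    linarith
  · -- 0 < m
    rcases le_or_gt (1/2 : ℝ) m with hm2 | hm2
    · calc DFun V x w ≤ 1 := DFun_le_one x w
        _ ≤ 2 * m := by linarith
    · -- 0 < m < 1/2 : find k minimal with 2⁻¹^(k+1) ≤ m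
      have hex : ∃ k : ℕ, ((2 : ℝ)⁻¹) ^ (k + 1) ≤ m := by
        obtain ⟨k, hk⟩ := exists_pow_lt_of_lt_one hm0' (by norm_num : ((2:ℝ)⁻¹) < 1)
        exact ⟨k, by
          calc ((2:ℝ)⁻¹) ^ (k+1) ≤ ((2:ℝ)⁻¹) ^ k :=
              pow_le_pow_of_le_one (by norm_num) (by norm_num) (by omega)
            _ ≤ m := hk.le⟩
      classical
      have hle : ((2 : ℝ)⁻¹) ^ (Nat.find hex + 1) ≤ m := Nat.find_spec hex
      have hlt : m < ((2 : ℝ)⁻¹) ^ (Nat.find hex) := by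
        rcases Nat.eq_zero_or_pos (Nat.find hex) with h0 | hpos
        · rw [h0, pow_zero]; linarith
        · have hm' := Nat.find_min hex (Nat.sub_lt hpos one_pos)
          push_neg at hm'
          have heq : Nat.find hex - 1 + 1 = Nat.find hex := by omega
          rwa [heq] at hm'
      calc DFun V x w ≤ ((2 : ℝ)⁻¹) ^ (Nat.find hex) := key _ hlt
        _ = 2 * ((2 : ℝ)⁻¹) ^ (Nat.find hex + 1) := by ring
        _ ≤ 2 * m := by linarith

/-- Kelley's chaining lemma. -/
lemma DFun_chain (hV1 : ∀ n, (1 : G) ∈ V n) (hVdec : ∀ n, V (n + 1) ⊆ V n)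
    (hVmul : ∀ n, V (n + 1) * V (n + 1) * V (n + 1) ⊆ V n) :
    ∀ (l : List G) (x : G), DFun V x (chainLast x l) ≤ 2 * chainCost (DFun V) x l := by
  classical
  have hD0 : ∀ a b : G, 0 ≤ DFun V a b := fun a b => DFun_nonneg a b
  suffices h : ∀ (n : ℕ) (l : List G), l.length ≤ n → ∀ x : G,
      DFun V x (chainLast x l) ≤ 2 * chainCost (DFun V) x l by
    intro l x; exact h l.length l le_rfl x
  intro n
  induction n with
  | zero =>
    intro l hl x
    have : l = [] := List.eq_nil_of_length_eq_zero (Nat.le_zero.mp hl)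
    subst this
    simp [DFun_self hV1]
  | succ n ih =>
    intro l hl x
    rcases List.eq_nil_or_concat l with rfl | ⟨L, b, rfl⟩
    · simp [DFun_self hV1]
    rw [List.concat_eq_append] at *
    set S := chainCost (DFun V) x (L ++ [b]) with hS
    have hS0 : 0 ≤ S := chainCost_nonneg hD0 _ x
    set p := chainLast x L with hp
    have hdecomp : S = chainCost (DFun V) x L + DFun V p b := by
      rw [hS, chainCost_append, ← hp]; simp
    have hlast : chainLast x (L ++ [b]) = b := by rw [chainLast_append]; simp
    rw [hlast]
    have hLlen : L.length ≤ n := by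
      have := hl; simp at this; omega
    rcases le_or_gt S 0 with hS0' | hSpos
    · -- S = 0 case
      have hSz : S = 0 := le_antisymm hS0' hS0
      have hL0 : chainCost (DFun V) x L ≤ 0 := by
        have := hD0 p b; linarith [hdecomp ▸ hSz]
      have hpb : DFun V p b ≤ 0 := by
        have := chainCost_nonneg hD0 L x; linarith [hdecomp ▸ hSz]
      have h1 : DFun V x p ≤ 0 := by
        have h := ih L hLlen x
        rw [← hp] at h
        linarith
      have := DFun_triple hV1 hVdec hVmul x p p b
      have hpp : DFun V p p = 0 := DFun_self hV1 p
      have hmax : max (DFun V x p) (max (DFun V p p) (DFun V p b)) ≤ 0 := by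
        refine max_le h1 (max_le (le_of_eq hpp) hpb)
      nlinarith [this, hmax]
    · -- S > 0 : split the chain
      set l' := L ++ [b] with hl'
      have hllen : l'.length ≤ n + 1 := hl
      have hlpos : 0 < l'.length := by simp [hl']
      have hsplit : ∃ j, j < l'.length ∧ chainCost (DFun V) x (l'.take j) ≤ S / 2 ∧
          S / 2 < chainCost (DFun V) x (l'.take (j + 1)) := by
        classical
        let P : ℕ → Prop := fun j => chainCost (DFun V) x (l'.take j) ≤ S / 2
        have hP0 : P 0 := by
          show chainCost (DFun V) x (l'.take 0) ≤ S / 2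
          simp only [List.take_zero, chainCost_nil]
          linarith
        have hjk : Nat.findGreatest P l'.length ≤ l'.length := Nat.findGreatest_le _
        have hPj : chainCost (DFun V) x (l'.take (Nat.findGreatest P l'.length)) ≤ S / 2 :=
          Nat.findGreatest_spec (Nat.zero_le _) hP0
        have hjlt : Nat.findGreatest P l'.length < l'.length := by
          rcases eq_or_lt_of_le hjk with he | hlt
          · exfalso
            have hPk : chainCost (DFun V) x (l'.take l'.length) ≤ S / 2 := he ▸ hPj
            simp only [List.take_length] at hPk
            rw [← hS] at hPk
            linarith
          · exact hlt
        have hnP : ¬ P (Nat.findGreatest P l'.length + 1) :=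
          Nat.findGreatest_is_greatest (P := P) (n := l'.length)
            (Nat.lt_succ_self _) (by omega)
        have hnP' : S / 2 <
            chainCost (DFun V) x (l'.take (Nat.findGreatest P l'.length + 1)) := by
          by_contra hcon
          push_neg at hcon
          exact hnP hcon
        exact ⟨Nat.findGreatest P l'.length, hjlt, hPj, hnP'⟩
      obtain ⟨j, hjlt, hC1, hC1'⟩ := hsplit
      set y := l'.get ⟨j, hjlt⟩ with hy
      set q := chainLast x (l'.take j) with hq
      have htake : l'.take (j + 1) = l'.take j ++ [y] := take_succ_of_lt l' j hjlt
      have hlast2 : chainLast x (l'.take (j + 1)) = y := by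
        rw [htake, chainLast_append]; simp
      have hstep : chainCost (DFun V) x (l'.take (j + 1)) =
          chainCost (DFun V) x (l'.take j) + DFun V q y := by
        rw [htake, chainCost_append, ← hq]; simp
      have htotal : S = chainCost (DFun V) x (l'.take (j + 1)) +
          chainCost (DFun V) y (l'.drop (j + 1)) := by
        conv_lhs => rw [hS, ← List.take_append_drop (j + 1) l']
        rw [chainCost_append, hlast2]
      have hC10 : 0 ≤ chainCost (DFun V) x (l'.take j) := chainCost_nonneg hD0 _ x
      have hC20 : 0 ≤ chainCost (DFun V) y (l'.drop (j + 1)) := chainCost_nonneg hD0 _ y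
      have hC2 : chainCost (DFun V) y (l'.drop (j + 1)) < S / 2 := by linarith
      have ih1 : DFun V x q ≤ 2 * chainCost (DFun V) x (l'.take j) := by
        have hlen : (l'.take j).length ≤ n := by
          rw [List.length_take]
          omega
        have h := ih (l'.take j) hlen x
        rw [← hq] at h
        exact h
      have ih2 : DFun V y (chainLast y (l'.drop (j + 1))) ≤
          2 * chainCost (DFun V) y (l'.drop (j + 1)) := by
        have hlen : (l'.drop (j + 1)).length ≤ n := by
          rw [List.length_drop]
          omega
        exact ih (l'.drop (j + 1)) hlen y
      have hlast3 : chainLast y (l'.drop (j + 1)) = b := by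
        have h := hlast
        conv_lhs at h => rw [← List.take_append_drop (j + 1) l']
        rw [chainLast_append, hlast2] at h
        exact h
      rw [hlast3] at ih2
      have hsum : S = chainCost (DFun V) x (l'.take j) + DFun V q y +
          chainCost (DFun V) y (l'.drop (j + 1)) := by
        rw [htotal, hstep]
      have hqy : DFun V q y ≤ S := by linarith
      have hxq : DFun V x q ≤ S := by linarith
      have hyb : DFun V y b ≤ S := by linarith
      have htri := DFun_triple hV1 hVdec hVmul x q y b
      have hmax : max (DFun V x q) (max (DFun V q y) (DFun V y b)) ≤ S :=
        max_le hxq (max_le hqy hyb)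
      calc DFun V x b ≤ 2 * max (DFun V x q) (max (DFun V q y) (DFun V y b)) := htri
        _ ≤ 2 * S := by linarith

end DFun

section Rho

variable {G : Type*} [Group G] {T : Set G}

/-- real-valued word metric. -/
noncomputable def rho (T : Set G) (x y : G) : ℝ := (wordLength T (x⁻¹ * y) : ℝ)

lemma rho_nonneg (x y : G) : 0 ≤ rho T x y := by
  unfold rho; positivity

lemma rho_self (h1 : (1 : G) ∈ T) (x : G) : rho T x x = 0 := by
  unfold rho
  rw [inv_mul_cancel, wordLength_one h1]
  simp

lemma rho_triangle (hgen : ∀ g : G, ∃ l : List G, (∀ s ∈ l, s ∈ T) ∧ l.prod = g)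
    (x y z : G) : rho T x z ≤ rho T x y + rho T y z := by
  unfold rho
  have h := wordLength_mul hgen (x⁻¹ * y) (y⁻¹ * z)
  have he : x⁻¹ * y * (y⁻¹ * z) = x⁻¹ * z := by group
  rw [he] at h
  exact_mod_cast h

lemma rho_le_one_of_mem {x y : G} (h : x⁻¹ * y ∈ T) : rho T x y ≤ 1 := by
  unfold rho
  exact_mod_cast wordLength_mem_le_one h

lemma two_le_rho (hgen : ∀ g : G, ∃ l : List G, (∀ s ∈ l, s ∈ T) ∧ l.prod = g)
    (h1 : (1 : G) ∈ T) {x y : G} (h : x⁻¹ * y ∉ T) : 2 ≤ rho T x y := by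
  unfold rho
  exact_mod_cast two_le_wordLength hgen h1 h

lemma wordLength_inv (hsym : T⁻¹ = T)
    (hgen : ∀ g : G, ∃ l : List G, (∀ s ∈ l, s ∈ T) ∧ l.prod = g) (g : G) :
    wordLength T g⁻¹ = wordLength T g := by
  have key : ∀ h : G, wordLength T h⁻¹ ≤ wordLength T h := by
    intro h
    obtain ⟨l, hlen, hmem, hp⟩ := wordLength_spec hgen h
    have hle := wordLength_le (g := h⁻¹) (l := (l.map (fun a => a⁻¹)).reverse)
      (by
        intro s hs
        rw [List.mem_reverse, List.mem_map] at hs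
        obtain ⟨a, ha, rfl⟩ := hs
        have hin : a⁻¹ ∈ T⁻¹ := by rw [Set.mem_inv, inv_inv]; exact hmem a ha
        rwa [hsym] at hin)
      (by rw [← List.prod_inv_reverse, hp])
    simpa [hlen] using hle
  refine le_antisymm ?_ ?_
  · exact key g
  · have := key g⁻¹
    rwa [inv_inv] at this

lemma rho_symm (hsym : T⁻¹ = T)
    (hgen : ∀ g : G, ∃ l : List G, (∀ s ∈ l, s ∈ T) ∧ l.prod = g) (x y : G) :
    rho T x y = rho T y x := by
  unfold rho
  have : y⁻¹ * x = (x⁻¹ * y)⁻¹ := by group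
  rw [this, wordLength_inv hsym hgen]

lemma rho_left_inv (g x y : G) : rho T (g * x) (g * y) = rho T x y := by
  unfold rho
  have : (g * x)⁻¹ * (g * y) = x⁻¹ * y := by group
  rw [this]

end Rho

section Cost

open scoped Classical

variable {G : Type*} [Group G]

/-- the cost function combining proto-distance and word metric. -/
noncomputable def costFun (T : Set G) (V : ℕ → Set G) (x y : G) : ℝ :=
  if x⁻¹ * y ∈ T then DFun V x y else 2 * rho T x y

variable {T : Set G} {V : ℕ → Set G}

lemma costFun_nonneg (x y : G) : 0 ≤ costFun T V x y := by
  unfold costFun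
  split_ifs
  · exact DFun_nonneg x y
  · linarith [rho_nonneg (T := T) x y]

lemma costFun_symm (hTsym : T⁻¹ = T) (hVsym : ∀ n, (V n)⁻¹ = V n)
    (hgen : ∀ g : G, ∃ l : List G, (∀ s ∈ l, s ∈ T) ∧ l.prod = g) (x y : G) :
    costFun T V x y = costFun T V y x := by
  unfold costFun
  have hinvT : ∀ a : G, a ∈ T → a⁻¹ ∈ T := by
    intro a ha
    have hin : a⁻¹ ∈ T⁻¹ := by rw [Set.mem_inv, inv_inv]; exact ha
    rwa [hTsym] at hin
  have heq : y⁻¹ * x = (x⁻¹ * y)⁻¹ := by group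
  have hmemiff : y⁻¹ * x ∈ T ↔ x⁻¹ * y ∈ T := by
    constructor
    · intro h
      rw [heq] at h
      have := hinvT _ h
      rwa [inv_inv] at this
    · intro h
      rw [heq]
      exact hinvT _ h
  by_cases h : x⁻¹ * y ∈ T
  · rw [if_pos h, if_pos (hmemiff.mpr h), DFun_symm hVsym]
  · rw [if_neg h, if_neg (fun hc => h (hmemiff.mp hc)), rho_symm hTsym hgen]

lemma costFun_left_inv (g x y : G) : costFun T V (g * x) (g * y) = costFun T V x y := by
  unfold costFun
  have heq : (g * x)⁻¹ * (g * y) = x⁻¹ * y := by group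
  rw [heq, DFun_left_inv]
  have := rho_left_inv (T := T) g x y
  rw [this]

lemma DFun_le_costFun (hgen : ∀ g : G, ∃ l : List G, (∀ s ∈ l, s ∈ T) ∧ l.prod = g)
    (h1 : (1 : G) ∈ T) (x y : G) : DFun V x y ≤ costFun T V x y := by
  unfold costFun
  split_ifs with h
  · exact le_refl _
  · calc DFun V x y ≤ 1 := DFun_le_one x y
      _ ≤ 2 * rho T x y := by linarith [two_le_rho hgen h1 h]

/-- The main comparison: word metric is dominated by the chain metric. -/
lemma rho_le_chainCost (hV1 : ∀ n, (1 : G) ∈ V n) (hVdec : ∀ n, V (n + 1) ⊆ V n)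
    (hVmul : ∀ n, V (n + 1) * V (n + 1) * V (n + 1) ⊆ V n) (hV0T : V 0 ⊆ T)
    (hgen : ∀ g : G, ∃ l : List G, (∀ s ∈ l, s ∈ T) ∧ l.prod = g) (h1 : (1 : G) ∈ T) :
    ∀ (l : List G) (x : G),
      rho T x (chainLast x l) ≤ 4 * chainCost (costFun T V) x l + 1 := by
  classical
  have hc0 : ∀ a b : G, 0 ≤ costFun T V a b := fun a b => costFun_nonneg a b
  have hD0 : ∀ a b : G, 0 ≤ DFun V a b := fun a b => DFun_nonneg a b
  have hDc : ∀ a b : G, DFun V a b ≤ costFun T V a b := DFun_le_costFun hgen h1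
  -- key fact: chains of small cost stay inside T
  have hsmall : ∀ (l : List G) (x : G), chainCost (costFun T V) x l < 1 / 2 →
      rho T x (chainLast x l) ≤ 1 := by
    intro l x hless
    have h1' : chainCost (DFun V) x l ≤ chainCost (costFun T V) x l := chainCost_mono hDc l x
    have h2' : DFun V x (chainLast x l) ≤ 2 * chainCost (DFun V) x l :=
      DFun_chain hV1 hVdec hVmul l x
    have h3' : DFun V x (chainLast x l) < 1 := by linarith
    have h4' : x⁻¹ * chainLast x l ∈ V 1 := by
      refine DFun_lt_mem hVdec (n := 0) ?_
      simpa using h3'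
    exact rho_le_one_of_mem (hV0T (hVdec 0 h4'))
  suffices h : ∀ (n : ℕ) (l : List G), l.length ≤ n → ∀ x : G,
      rho T x (chainLast x l) ≤ 4 * chainCost (costFun T V) x l + 1 by
    intro l x; exact h l.length l le_rfl x
  intro n
  induction n with
  | zero =>
    intro l hl x
    have : l = [] := List.eq_nil_of_length_eq_zero (Nat.le_zero.mp hl)
    subst this
    simp [rho_self h1]
  | succ n ih =>
    intro l hl x
    by_cases hS : chainCost (costFun T V) x l < 1 / 2
    · have := hsmall l x hS
      have h0 := chainCost_nonneg hc0 l x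
      linarith
    · push_neg at hS
      have hfind : ∃ j, 1 / 2 ≤ chainCost (costFun T V) x (l.take j) :=
        ⟨l.length, by rw [List.take_length]; exact hS⟩
      have hj0pos : ¬ (1 / 2 : ℝ) ≤ chainCost (costFun T V) x (l.take 0) := by
        simp only [List.take_zero, chainCost_nil]
        norm_num
      have hj0le : Nat.find hfind ≤ l.length := Nat.find_min' hfind
        (by rw [List.take_length]; exact hS)
      have hj0ne : Nat.find hfind ≠ 0 := by
        intro hc
        have hsp := Nat.find_spec hfind
        rw [hc] at hsp
        exact hj0pos hsp
      have hilt : Nat.find hfind - 1 < l.length := by omega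
      have hisucc : Nat.find hfind - 1 + 1 = Nat.find hfind := by omega
      set i := Nat.find hfind - 1 with hidef
      have hCi : chainCost (costFun T V) x (l.take i) < 1 / 2 := by
        have := Nat.find_min hfind (show i < Nat.find hfind by omega)
        push_neg at this
        exact this
      have hj₀ : 1 / 2 ≤ chainCost (costFun T V) x (l.take (i + 1)) := by
        rw [hisucc]
        exact Nat.find_spec hfind
      set y := l.get ⟨i, hilt⟩ with hy
      set q := chainLast x (l.take i) with hq
      have htake : l.take (i + 1) = l.take i ++ [y] := take_succ_of_lt l i hilt
      have hlast2 : chainLast x (l.take (i + 1)) = y := by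
        rw [htake, chainLast_append]; simp
      have hstep : chainCost (costFun T V) x (l.take (i + 1)) =
          chainCost (costFun T V) x (l.take i) + costFun T V q y := by
        rw [htake, chainCost_append, ← hq]; simp
      have htotal : chainCost (costFun T V) x l =
          chainCost (costFun T V) x (l.take (i + 1)) +
            chainCost (costFun T V) y (l.drop (i + 1)) := by
        conv_lhs => rw [← List.take_append_drop (i + 1) l]
        rw [chainCost_append, hlast2]
      have hlast3 : chainLast y (l.drop (i + 1)) = chainLast x l := by
        conv_rhs => rw [← List.take_append_drop (i + 1) l]
        rw [chainLast_append, hlast2]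
      have hC10 : 0 ≤ chainCost (costFun T V) x (l.take i) := chainCost_nonneg hc0 _ x
      have hC20 : 0 ≤ chainCost (costFun T V) y (l.drop (i + 1)) := chainCost_nonneg hc0 _ y
      -- prefix: rho x q ≤ 1
      have hxq : rho T x q ≤ 1 := by
        rw [hq]
        exact hsmall (l.take i) x hCi
      -- suffix via IH
      have hyz : rho T y (chainLast x l) ≤
          4 * chainCost (costFun T V) y (l.drop (i + 1)) + 1 := by
        have hlen : (l.drop (i + 1)).length ≤ n := by
          rw [List.length_drop]
          omega
        have h := ih (l.drop (i + 1)) hlen y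
        rwa [hlast3] at h
      have htri : rho T x (chainLast x l) ≤
          rho T x q + rho T q y + rho T y (chainLast x l) := by
        have t1 := rho_triangle hgen x q (chainLast x l)
        have t2 := rho_triangle hgen q y (chainLast x l)
        linarith
      by_cases hmem : q⁻¹ * y ∈ T
      · have hqy1 : rho T q y ≤ 1 := rho_le_one_of_mem hmem
        have hs0 : 0 ≤ costFun T V q y := hc0 q y
        have hhalf : 1 / 2 ≤ chainCost (costFun T V) x (l.take i) + costFun T V q y := by
          rw [← hstep]; exact hj₀
        rw [htotal, hstep]
        linarith
      · have hseq : costFun T V q y = 2 * rho T q y := by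
          unfold costFun
          rw [if_neg hmem]
        have hs4 : 4 ≤ costFun T V q y := by
          rw [hseq]
          linarith [two_le_rho hgen h1 hmem]
        rw [htotal, hstep]
        have : rho T q y = costFun T V q y / 2 := by rw [hseq]; ring
        linarith

end Cost

section Topo

variable {G : Type*} [Group G] [TopologicalSpace G]

lemma pseudo_translate {d : G → G → ℝ} (hd : IsContLeftInvPseudometric G d) (x y : G) :
    d x y = d 1 (x⁻¹ * y) := by
  have h := hd.left_inv x⁻¹ x y
  rw [inv_mul_cancel] at h
  exact h.symm

lemma pseudo_inv_eq {d : G → G → ℝ} (hd : IsContLeftInvPseudometric G d) (g : G) :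
    d 1 g⁻¹ = d 1 g := by
  have h := hd.left_inv g⁻¹ 1 g
  rw [mul_one, inv_mul_cancel] at h
  rw [← h, hd.symm]

lemma cb_normal {A : Set G} (h : IsCoarselyBounded G A) {d : G → G → ℝ}
    (hd : IsContLeftInvPseudometric G d) : ∃ M : ℝ, 0 ≤ M ∧ ∀ a ∈ A, d 1 a ≤ M := by
  obtain ⟨M, hM⟩ := h d hd
  rcases A.eq_empty_or_nonempty with rfl | ⟨a₀, ha₀⟩
  · exact ⟨0, le_rfl, by simp⟩
  · refine ⟨max 0 (d 1 a₀ + M), le_max_left _ _, fun a ha => ?_⟩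
    have h1 := hd.triangle 1 a₀ a
    have h2 := hM a₀ ha₀ a ha
    have h3 : d 1 a₀ + M ≤ max 0 (d 1 a₀ + M) := le_max_right _ _
    linarith

lemma d_le_word {T : Set G} (hgen : ∀ g : G, ∃ l : List G, (∀ s ∈ l, s ∈ T) ∧ l.prod = g)
    {d' : G → G → ℝ} (hd' : IsContLeftInvPseudometric G d') {M : ℝ}
    (hM : ∀ t ∈ T, d' 1 t ≤ M) (hM0 : 0 ≤ M) (g : G) :
    d' 1 g ≤ M * (wordLength T g : ℝ) := by
  have listlem : ∀ l : List G, (∀ s ∈ l, s ∈ T) → d' 1 l.prod ≤ M * l.length := by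
    intro l
    induction l with
    | nil =>
      intro _
      simp [hd'.self]
    | cons a l ihl =>
      intro hmem
      have h1 : d' 1 (a * l.prod) ≤ d' 1 a + d' a (a * l.prod) := hd'.triangle _ _ _
      have h2 : d' a (a * l.prod) = d' 1 l.prod := by
        have := hd'.left_inv a 1 l.prod
        rw [mul_one] at this
        exact this
      have h3 := ihl (fun s hs => hmem s (List.mem_cons_of_mem a hs))
      have h4 := hM a (hmem a List.mem_cons_self)
      rw [List.prod_cons]
      simp only [List.length_cons]
      push_cast
      rw [h2] at h1
      nlinarith
  obtain ⟨l, hlen, hmem, hp⟩ := wordLength_spec hgen g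
  have := listlem l hmem
  rw [hp, hlen] at this
  exact this

variable [IsTopologicalGroup G]

lemma exists_V {T : Set G} (hT : T ∈ nhds 1) :
    ∃ V : ℕ → Set G, (∀ n, V n ∈ nhds 1) ∧ (∀ n, (V n)⁻¹ = V n) ∧ V 0 ⊆ T ∧
      (∀ n, V (n + 1) ⊆ V n) ∧ ∀ n, V (n + 1) * V (n + 1) * V (n + 1) ⊆ V n := by
  have step : ∀ W : Set G, W ∈ nhds (1 : G) →
      ∃ W' : Set G, W' ∈ nhds (1 : G) ∧ W'⁻¹ = W' ∧ W' ⊆ W ∧ W' * W' * W' ⊆ W := by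
    intro W hW
    obtain ⟨A, hA, hA2⟩ := exists_nhds_one_split hW
    obtain ⟨B, hB, hB2⟩ := exists_nhds_one_split hA
    have h1A : (1 : G) ∈ A := mem_of_mem_nhds hA
    have h1B : (1 : G) ∈ B := mem_of_mem_nhds hB
    have hBA : B ⊆ A := by
      intro b hb
      have := hB2 b hb 1 h1B
      rwa [mul_one] at this
    have hAW : A ⊆ W := by
      intro a ha
      have := hA2 a ha 1 h1A
      rwa [mul_one] at this
    refine ⟨B ∩ B⁻¹ ∩ (W ∩ W⁻¹), ?_, ?_, ?_, ?_⟩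
    · exact Filter.inter_mem (Filter.inter_mem hB (inv_mem_nhds_one G hB))
        (Filter.inter_mem hW (inv_mem_nhds_one G hW))
    · rw [Set.inter_inv, Set.inter_inv, Set.inter_inv, inv_inv, inv_inv,
        Set.inter_comm B⁻¹ B, Set.inter_comm W⁻¹ W]
    · exact fun a ha => ha.2.1
    · rintro g hg
      rw [Set.mem_mul] at hg
      obtain ⟨u, hu, w3, hw3, rfl⟩ := hg
      rw [Set.mem_mul] at hu
      obtain ⟨w1, hw1, w2, hw2, rfl⟩ := hu
      have hw1B : w1 ∈ B := hw1.1.1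
      have hw2B : w2 ∈ B := hw2.1.1
      have hw3B : w3 ∈ B := hw3.1.1
      exact hA2 (w1 * w2) (hB2 w1 hw1B w2 hw2B) w3 (hBA hw3B)
  choose f hf1 hf2 hf3 hf4 using step
  let F : {A : Set G // A ∈ nhds (1 : G)} → {A : Set G // A ∈ nhds (1 : G)} :=
    fun A => ⟨f A.1 A.2, hf1 A.1 A.2⟩
  let W0 : {A : Set G // A ∈ nhds (1 : G)} := ⟨f T hT, hf1 T hT⟩
  refine ⟨fun n => (F^[n] W0).1, fun n => (F^[n] W0).2, ?_, ?_, ?_, ?_⟩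
  · intro n
    cases n with
    | zero => exact hf2 T hT
    | succ n =>
      simp only [Function.iterate_succ_apply']
      exact hf2 _ _
  · exact hf3 T hT
  · intro n
    simp only [Function.iterate_succ_apply']
    exact hf3 _ _
  · intro n
    simp only [Function.iterate_succ_apply']
    exact hf4 _ _

/-- (3) implies (1) -/
lemma three_to_one (S : Set G) (hScb : IsCoarselyBounded G S)
    (hSgen : Subgroup.closure S = ⊤) (U : Set G) (hU : U ∈ nhds 1)
    (hUcb : IsCoarselyBounded G U) : AdmitsAGeometry G := by
  classical
  set T : Set G := S ∪ S⁻¹ ∪ (U ∪ U⁻¹) with hT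
  have hUT : U ⊆ T := fun u hu => Or.inr (Or.inl hu)
  have hST : S ⊆ T := fun s hs => Or.inl (Or.inl hs)
  have hTn : T ∈ nhds (1 : G) := Filter.mem_of_superset hU hUT
  have h1T : (1 : G) ∈ T := mem_of_mem_nhds hTn
  have hTsym : T⁻¹ = T := by
    rw [hT]
    ext a
    simp only [Set.mem_union, Set.mem_inv, inv_inv]
    tauto
  have hTgen' : Subgroup.closure T = ⊤ := by
    have hle : Subgroup.closure S ≤ Subgroup.closure T := Subgroup.closure_mono hST
    rw [hSgen] at hle
    exact top_unique hle
  have hgen : ∀ g : G, ∃ l : List G, (∀ s ∈ l, s ∈ T) ∧ l.prod = g :=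
    word_exists hTgen' hTsym
  obtain ⟨V, hVn, hVsym, hV0T, hVdec, hVmul⟩ := exists_V hTn
  have hV1 : ∀ n, (1 : G) ∈ V n := fun n => mem_of_mem_nhds (hVn n)
  have hc0 : ∀ a b : G, 0 ≤ costFun T V a b := fun a b => costFun_nonneg a b
  have hcsym : ∀ a b : G, costFun T V a b = costFun T V b a :=
    costFun_symm hTsym hVsym hgen
  have hcinv : ∀ g a b : G, costFun T V (g * a) (g * b) = costFun T V a b :=
    costFun_left_inv
  set d : G → G → ℝ := dOf (costFun T V) with hd
  have hdsym : ∀ x y : G, d x y = d y x := dOf_symm hc0 hcsym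
  have hdtri : ∀ x y z : G, d x z ≤ d x y + d y z := dOf_triangle hc0
  have hd0 : ∀ x y : G, 0 ≤ d x y := dOf_nonneg hc0
  -- small distances
  have hdsmall : ∀ (n : ℕ) (a b : G), a⁻¹ * b ∈ V n → d a b ≤ ((2:ℝ)⁻¹) ^ n := by
    intro n a b hab
    have h1 : costFun T V a b = DFun V a b := by
      unfold costFun
      rw [if_pos (hV0T (V_antitone hVdec 0 n (Nat.zero_le n) hab))]
    calc d a b ≤ costFun T V a b := dOf_le hc0 a b
      _ = DFun V a b := h1
      _ ≤ ((2:ℝ)⁻¹) ^ n := DFun_le_of_mem hab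
  have hdmetric : IsContLeftInvPseudometric G d := by
    constructor
    · -- continuity
      rw [continuous_iff_continuousAt]
      rintro ⟨x, y⟩
      rw [ContinuousAt, Metric.tendsto_nhds]
      intro ε hε
      obtain ⟨n, hn⟩ := exists_pow_lt_of_lt_one (show (0:ℝ) < ε / 2 by linarith)
        (by norm_num : ((2:ℝ)⁻¹) < 1)
      have hx : {a : G | x⁻¹ * a ∈ V n} ∈ nhds x := by
        have hcont : ContinuousAt (fun a : G => x⁻¹ * a) x :=
          (continuous_const.mul continuous_id).continuousAt
        have := hcont.preimage_mem_nhds (by simpa using hVn n)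
        simpa [Set.preimage] using this
      have hy : {a : G | y⁻¹ * a ∈ V n} ∈ nhds y := by
        have hcont : ContinuousAt (fun a : G => y⁻¹ * a) y :=
          (continuous_const.mul continuous_id).continuousAt
        have := hcont.preimage_mem_nhds (by simpa using hVn n)
        simpa [Set.preimage] using this
      have hprod := Filter.prod_mem_prod hx hy
      rw [← nhds_prod_eq] at hprod
      filter_upwards [hprod] with p hp
      obtain ⟨hp1, hp2⟩ := hp
      have e1 : d x p.1 ≤ ((2:ℝ)⁻¹) ^ n := hdsmall n x p.1 hp1
      have e2 : d y p.2 ≤ ((2:ℝ)⁻¹) ^ n := hdsmall n y p.2 hp2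
      have t1 : d p.1 p.2 ≤ d p.1 x + d x y + d y p.2 := by
        have a1 := hdtri p.1 x p.2
        have a2 := hdtri x y p.2
        linarith
      have t2 : d x y ≤ d x p.1 + d p.1 p.2 + d p.2 y := by
        have a1 := hdtri x p.1 y
        have a2 := hdtri p.1 p.2 y
        linarith
      have s1 : d p.1 x = d x p.1 := hdsym p.1 x
      have s2 : d p.2 y = d y p.2 := hdsym p.2 y
      rw [Real.dist_eq, abs_lt]
      constructor <;> nlinarith [hd0 x p.1, hd0 y p.2]
    · exact dOf_self hc0
    · exact hdsym
    · exact hd0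
    · exact hdtri
    · exact dOf_left_inv hc0 hcinv
  refine ⟨d, hdmetric, ?_⟩
  intro d' hd'
  obtain ⟨MS, hMS0, hMS⟩ := cb_normal hScb hd'
  obtain ⟨MU, hMU0, hMU⟩ := cb_normal hUcb hd'
  set M := max MS MU with hM
  have hM0 : 0 ≤ M := le_trans hMS0 (le_max_left _ _)
  have hMT : ∀ t ∈ T, d' 1 t ≤ M := by
    intro t ht
    rcases ht with (hts | hts) | (htu | htu)
    · exact le_trans (hMS t hts) (le_max_left _ _)
    · rw [Set.mem_inv] at hts
      have := hMS t⁻¹ hts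
      rw [pseudo_inv_eq hd'] at this
      exact le_trans this (le_max_left _ _)
    · exact le_trans (hMU t htu) (le_max_right _ _)
    · rw [Set.mem_inv] at htu
      have := hMU t⁻¹ htu
      rw [pseudo_inv_eq hd'] at this
      exact le_trans this (le_max_right _ _)
  refine ⟨4 * M + 1, M, by linarith, hM0, ?_⟩
  intro g h
  have hword : d' g h ≤ M * rho T g h := by
    rw [pseudo_translate hd' g h]
    exact d_le_word hgen hd' hMT hM0 (g⁻¹ * h)
  have hrho : rho T g h ≤ 4 * d g h + 1 := by
    refine le_dOf hc0 (by norm_num) ?_ g h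
    exact fun l x => rho_le_chainCost hV1 hVdec hVmul hV0T hgen h1T l x
  nlinarith [hd0 g h]

end Topo

section OneTwo

variable {G : Type*} [Group G] [TopologicalSpace G] [IsTopologicalGroup G]

lemma one_to_two (h : AdmitsAGeometry G) :
    ∃ S : Set G, IsOpen S ∧ IsCoarselyBounded G S ∧ Subgroup.closure S = ⊤ := by
  classical
  obtain ⟨d, hd, hmax⟩ := h
  have hcont1 : Continuous fun g : G => d 1 g :=
    hd.continuous.comp (Continuous.prodMk_right (1 : G))
  set H : ℕ → Subgroup G := fun n => Subgroup.closure {g : G | d 1 g < (n : ℝ) + 1} with hH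
  have hHmono : ∀ m n : ℕ, m ≤ n → H m ≤ H n := by
    intro m n hmn
    refine Subgroup.closure_mono ?_
    intro g hg
    simp only [Set.mem_setOf_eq] at hg ⊢
    have : (m : ℝ) ≤ (n : ℝ) := Nat.cast_le.mpr hmn
    linarith
  have hcover : ∀ g : G, ∃ n : ℕ, g ∈ H n := by
    intro g
    obtain ⟨n, hn⟩ := exists_nat_gt (d 1 g)
    exact ⟨n, Subgroup.subset_closure (by simp only [Set.mem_setOf_eq]; linarith)⟩
  have key : ∃ n, H n = ⊤ := by
    by_contra hcon
    push_neg at hcon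
    have hgg' : ∀ n : ℕ, ∃ g : G, g ∉ H n := by
      intro n
      by_contra h2
      push_neg at h2
      exact hcon n ((Subgroup.eq_top_iff' (H n)).mpr h2)
    choose gg hgg using hgg'
    set q : ℕ → ℝ := fun j => ((j : ℝ) + 1) * (d 1 (gg j) + 1) with hqdef
    have hq0 : ∀ j, 0 ≤ q j := by
      intro j
      have h0 := hd.nonneg 1 (gg j)
      show (0:ℝ) ≤ ((j : ℝ) + 1) * (d 1 (gg j) + 1)
      have h1 : (0:ℝ) ≤ (j : ℝ) + 1 := by positivity
      nlinarith
    set p : ℕ → ℝ := fun n => ∑ j ∈ Finset.range n, q j with hpdef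
    have hpmono : ∀ m n : ℕ, m ≤ n → p m ≤ p n := by
      intro m n hmn
      exact Finset.sum_le_sum_of_subset_of_nonneg (Finset.range_subset_range.mpr hmn)
        (fun j _ _ => hq0 j)
    have hp0 : ∀ n, 0 ≤ p n := fun n => Finset.sum_nonneg fun j _ => hq0 j
    have hne : ∀ g : G, {n : ℕ | g ∈ H n}.Nonempty := fun g => hcover g
    set nIdx : G → ℕ := fun g => sInf {n : ℕ | g ∈ H n} with hnIdx
    have hmem : ∀ g : G, g ∈ H (nIdx g) := fun g => Nat.sInf_mem (hne g)
    have hle : ∀ (g : G) (n : ℕ), g ∈ H n → nIdx g ≤ n := fun g n hn => Nat.sInf_le hn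
    set ρ : G → G → ℝ := fun x y => p (nIdx (x⁻¹ * y)) with hρ
    have hidx_one : nIdx (1 : G) = 0 :=
      Nat.le_zero.mp (hle 1 0 (one_mem _))
    have hidx_congr : ∀ a b : G, (∀ n, a ∈ H n ↔ b ∈ H n) → nIdx a = nIdx b := by
      intro a b hab
      have hset : {n : ℕ | a ∈ H n} = {n : ℕ | b ∈ H n} := Set.ext fun n => hab n
      show sInf {n : ℕ | a ∈ H n} = sInf {n : ℕ | b ∈ H n}
      rw [hset]
    have hρmetric : IsContLeftInvPseudometric G ρ := by
      constructor
      · -- continuity : locally constant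
        rw [continuous_iff_continuousAt]
        rintro ⟨x, y⟩
        have hNopen : IsOpen {g : G | d 1 g < 1} := isOpen_lt hcont1 continuous_const
        have hN : {g : G | d 1 g < 1} ∈ nhds (1 : G) :=
          hNopen.mem_nhds (by simp [hd.self])
        have hNH : ∀ g ∈ {g : G | d 1 g < 1}, ∀ n, g ∈ H n := by
          intro g hg n
          refine hHmono 0 n (Nat.zero_le n) (Subgroup.subset_closure ?_)
          simp only [Set.mem_setOf_eq] at hg ⊢
          norm_num
          linarith
        have hx : {a : G | x⁻¹ * a ∈ {g : G | d 1 g < 1}} ∈ nhds x := by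
          have hcont : ContinuousAt (fun a : G => x⁻¹ * a) x :=
            (continuous_const.mul continuous_id).continuousAt
          have := hcont.preimage_mem_nhds (by simpa using hN)
          simpa [Set.preimage] using this
        have hy : {a : G | y⁻¹ * a ∈ {g : G | d 1 g < 1}} ∈ nhds y := by
          have hcont : ContinuousAt (fun a : G => y⁻¹ * a) y :=
            (continuous_const.mul continuous_id).continuousAt
          have := hcont.preimage_mem_nhds (by simpa using hN)
          simpa [Set.preimage] using this
        have hprod := Filter.prod_mem_prod hx hy
        rw [← nhds_prod_eq] at hprod
        refine Filter.EventuallyEq.continuousAt (y := ρ x y) ?_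
        filter_upwards [hprod] with a ha
        obtain ⟨ha1, ha2⟩ := ha
        have hmem1 : ∀ n, x⁻¹ * a.1 ∈ H n := hNH _ ha1
        have hmem2 : ∀ n, y⁻¹ * a.2 ∈ H n := hNH _ ha2
        show p (nIdx (a.1⁻¹ * a.2)) = p (nIdx (x⁻¹ * y))
        refine congrArg p (hidx_congr _ _ ?_)
        intro n
        constructor
        · intro hab
          have h3 : a.2⁻¹ * y ∈ H n := by
            have h4 := (H n).inv_mem (hmem2 n)
            rwa [mul_inv_rev, inv_inv] at h4
          have heq : x⁻¹ * y = (x⁻¹ * a.1) * (a.1⁻¹ * a.2) * (a.2⁻¹ * y) := by group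
          rw [heq]
          exact mul_mem (mul_mem (hmem1 n) hab) h3
        · intro hab
          have heq : a.1⁻¹ * a.2 = (x⁻¹ * a.1)⁻¹ * (x⁻¹ * y) * (y⁻¹ * a.2) := by group
          rw [heq]
          exact mul_mem (mul_mem ((H n).inv_mem (hmem1 n)) hab) (hmem2 n)
      · intro x
        show p (nIdx (x⁻¹ * x)) = 0
        rw [inv_mul_cancel, hidx_one]
        show (∑ j ∈ Finset.range 0, q j) = 0
        simp
      · intro x y
        show p (nIdx (x⁻¹ * y)) = p (nIdx (y⁻¹ * x))
        refine congrArg p (hidx_congr _ _ ?_)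
        intro n
        have heq : y⁻¹ * x = (x⁻¹ * y)⁻¹ := by group
        constructor
        · intro hin
          rw [heq]
          exact (H n).inv_mem hin
        · intro hin
          rw [heq] at hin
          have h4 := (H n).inv_mem hin
          rwa [inv_inv] at h4
      · intro x y
        exact hp0 _
      · intro x y z
        have hmax' : x⁻¹ * z ∈ H (max (nIdx (x⁻¹ * y)) (nIdx (y⁻¹ * z))) := by
          have h1 : x⁻¹ * y ∈ H (max (nIdx (x⁻¹ * y)) (nIdx (y⁻¹ * z))) :=
            hHmono _ _ (le_max_left _ _) (hmem _)
          have h2 : y⁻¹ * z ∈ H (max (nIdx (x⁻¹ * y)) (nIdx (y⁻¹ * z))) :=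
            hHmono _ _ (le_max_right _ _) (hmem _)
          have heq : x⁻¹ * z = (x⁻¹ * y) * (y⁻¹ * z) := by group
          rw [heq]
          exact mul_mem h1 h2
        have hle' : nIdx (x⁻¹ * z) ≤ max (nIdx (x⁻¹ * y)) (nIdx (y⁻¹ * z)) :=
          hle _ _ hmax'
        have hp1 : p (nIdx (x⁻¹ * z)) ≤ p (max (nIdx (x⁻¹ * y)) (nIdx (y⁻¹ * z))) :=
          hpmono _ _ hle'
        show p (nIdx (x⁻¹ * z)) ≤ p (nIdx (x⁻¹ * y)) + p (nIdx (y⁻¹ * z))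
        rcases max_cases (nIdx (x⁻¹ * y)) (nIdx (y⁻¹ * z)) with ⟨hm, _⟩ | ⟨hm, _⟩ <;>
          · rw [hm] at hp1
            have := hp0 (nIdx (x⁻¹ * y))
            have := hp0 (nIdx (y⁻¹ * z))
            linarith
      · intro g x y
        show p (nIdx ((g * x)⁻¹ * (g * y))) = p (nIdx (x⁻¹ * y))
        have heq : (g * x)⁻¹ * (g * y) = x⁻¹ * y := by group
        rw [heq]
    obtain ⟨L, K, hL, hK, hb⟩ := hmax ρ hρmetric
    set k := ⌈max L K⌉₊ with hk
    have hLk : L ≤ (k : ℝ) := le_trans (le_max_left _ _) (Nat.le_ceil _)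
    have hKk : K ≤ (k : ℝ) := le_trans (le_max_right _ _) (Nat.le_ceil _)
    have hbk := hb 1 (gg k)
    have hρval : ρ 1 (gg k) = p (nIdx (gg k)) := by
      show p (nIdx ((1:G)⁻¹ * gg k)) = p (nIdx (gg k))
      rw [inv_one, one_mul]
    have hidxk : k + 1 ≤ nIdx (gg k) := by
      by_contra hc
      push_neg at hc
      exact hgg k (hHmono _ k (by omega) (hmem (gg k)))
    have hqp : q k ≤ p (nIdx (gg k)) :=
      le_trans (Finset.single_le_sum (fun j _ => hq0 j) (Finset.self_mem_range_succ k))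
        (hpmono (k + 1) _ hidxk)
    have hdn := hd.nonneg 1 (gg k)
    rw [hρval] at hbk
    have hqp' : ((k:ℝ) + 1) * (d 1 (gg k) + 1) ≤ p (nIdx (gg k)) := hqp
    nlinarith [mul_le_mul_of_nonneg_right (show L ≤ (k:ℝ) + 1 by linarith) hdn]
  obtain ⟨n, hn⟩ := key
  refine ⟨{g : G | d 1 g < (n : ℝ) + 1}, isOpen_lt hcont1 continuous_const, ?_, hn⟩
  intro d' hd'
  obtain ⟨L, K, hL, hK, hb⟩ := hmax d' hd'
  refine ⟨L * (2 * ((n : ℝ) + 1)) + K, fun a ha b hb' => ?_⟩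
  simp only [Set.mem_setOf_eq] at ha hb'
  have h1 := hb a b
  have h2 := hd.triangle a 1 b
  have h3 : d a 1 = d 1 a := hd.symm a 1
  nlinarith [mul_le_mul_of_nonneg_left (show d a b ≤ 2 * ((n:ℝ) + 1) by linarith) hL.le]

lemma two_to_three
    (h : ∃ S : Set G, IsOpen S ∧ IsCoarselyBounded G S ∧ Subgroup.closure S = ⊤) :
    (∃ S : Set G, IsCoarselyBounded G S ∧ Subgroup.closure S = ⊤) ∧
      ∃ U : Set G, U ∈ nhds (1 : G) ∧ IsCoarselyBounded G U := by
  obtain ⟨S, hSo, hScb, hSgen⟩ := h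
  refine ⟨⟨S, hScb, hSgen⟩, ?_⟩
  rcases S.eq_empty_or_nonempty with rfl | ⟨s, hs⟩
  · -- trivial group
    have htriv : ∀ g : G, g = 1 := by
      intro g
      have : g ∈ Subgroup.closure (∅ : Set G) := by rw [hSgen]; trivial
      rwa [Subgroup.closure_empty, Subgroup.mem_bot] at this
    refine ⟨Set.univ, Filter.univ_mem, ?_⟩
    intro d hd
    refine ⟨0, fun a _ b _ => ?_⟩
    rw [htriv a, htriv b, hd.self]
  · refine ⟨(fun a => s * a) ⁻¹' S, ?_, ?_⟩
    · have hop : IsOpen ((fun a => s * a) ⁻¹' S) :=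
        hSo.preimage (continuous_const.mul continuous_id)
      refine hop.mem_nhds ?_
      simp only [Set.mem_preimage, mul_one]
      exact hs
    · intro d hd
      obtain ⟨M, hM⟩ := hScb d hd
      refine ⟨M, fun a ha b hb => ?_⟩
      simp only [Set.mem_preimage] at ha hb
      have := hM (s * a) ha (s * b) hb
      rwa [hd.left_inv] at this
end OneTwo

end CBAux

/-- Characterization of admitting a geometry: `G` admits a geometry iff `G` is
generated by an open coarsely bounded set iff `G` is generated by a coarsely bounded
set and is locally bounded. -/
theorem admitsAGeometry_tfae {G : Type*} [Group G] [TopologicalSpace G]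
    [IsTopologicalGroup G] :
    List.TFAE
      [AdmitsAGeometry G,
       ∃ S : Set G, IsOpen S ∧ IsCoarselyBounded G S ∧ Subgroup.closure S = ⊤,
       (∃ S : Set G, IsCoarselyBounded G S ∧ Subgroup.closure S = ⊤) ∧
         ∃ U : Set G, U ∈ nhds (1 : G) ∧ IsCoarselyBounded G U] := by
  tfae_have 1 → 2 := CBAux.one_to_two
  tfae_have 2 → 3 := CBAux.two_to_three
  tfae_have 3 → 1 := by
    rintro ⟨⟨S, h1, h2⟩, U, h3, h4⟩
    exact CBAux.three_to_one S h1 h2 U h3 h4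
  tfae_finish
end

section
/- Let G be a topological group whose underlying topological space is a Baire space, and suppose G is generated by a coarsely bounded subset S ⊆ G. Then G is locally bounded: G has an identity neighborhood that is coarsely bounded in G. -/
open Pointwise

section Aux
variable {G : Type*} [Group G] [TopologicalSpace G]

omit [TopologicalSpace G] in
lemma listProd_mem_pow (T : Set G) : ∀ l : List G, (∀ s ∈ l, s ∈ T) → l.prod ∈ T ^ l.length := by
  intro l
  induction l with
  | nil => intro _; simp [Set.mem_one]
  | cons a l ih =>
      intro h
      rw [List.prod_cons, List.length_cons, pow_succ']
      exact Set.mul_mem_mul (h a (by simp)) (ih fun s hs => h s (List.mem_cons_of_mem _ hs))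

lemma pow_bounded {d : G → G → ℝ} (hd : IsContLeftInvPseudometric G d)
    {T : Set G} {C : ℝ} (hC : 0 ≤ C) (hT : ∀ t ∈ T, d 1 t ≤ C) :
    ∀ n : ℕ, ∀ u ∈ T ^ n, d 1 u ≤ n * C := by
  intro n
  induction n with
  | zero => intro u hu; rw [pow_zero, Set.mem_one] at hu; simp [hu, hd.self]
  | succ n ih =>
      intro u hu
      rw [pow_succ] at hu
      obtain ⟨v, hv, t, ht, rfl⟩ := hu
      calc d 1 (v * t) ≤ d 1 v + d v (v * t) := hd.triangle _ _ _
        _ = d 1 v + d 1 t := by rw [← hd.left_inv v 1 t, mul_one]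
        _ ≤ n * C + C := add_le_add (ih v hv) (hT t ht)
        _ = (n + 1 : ℕ) * C := by push_cast; ring

end Aux

/-- A Baire topological group generated by a coarsely bounded set is locally
bounded. -/
theorem locallyBounded_of_baire_cb_generated {G : Type*} [Group G] [TopologicalSpace G]
    [IsTopologicalGroup G] [BaireSpace G]
    (S : Set G) (hS : IsCoarselyBounded G S) (hgen : Subgroup.closure S = ⊤) :
    ∃ U : Set G, U ∈ nhds (1 : G) ∧ IsCoarselyBounded G U := by
  classical
  -- the symmetric generating set
  set T : Set G := S ∪ S⁻¹ ∪ {1} with hT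
  have h1T : (1 : G) ∈ T := by simp [hT]
  -- every element of G is in some power of T
  have hcover : ∀ g : G, ∃ n : ℕ, g ∈ T ^ n := by
    intro g
    have hg : g ∈ (Subgroup.closure S).toSubmonoid := by
      rw [hgen]; trivial
    rw [Subgroup.closure_toSubmonoid] at hg
    obtain ⟨l, hl, rfl⟩ := Submonoid.exists_list_of_mem_closure hg
    exact ⟨l.length, listProd_mem_pow T l fun s hs => Or.inl (hl s hs)⟩
  -- Baire: some closure (T^n) has nonempty interior
  have hclosed : ∀ n : ℕ, IsClosed (closure (T ^ n)) := fun n => isClosed_closure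
  have hunion : ⋃ n : ℕ, closure (T ^ n) = Set.univ := by
    apply Set.eq_univ_of_forall
    intro g
    obtain ⟨n, hn⟩ := hcover g
    exact Set.mem_iUnion.2 ⟨n, subset_closure hn⟩
  obtain ⟨n, x, hx⟩ := nonempty_interior_of_iUnion_of_closed hclosed hunion
  refine ⟨x⁻¹ • interior (closure (T ^ n)), ?_, ?_⟩
  · have : IsOpen (x⁻¹ • interior (closure (T ^ n))) := isOpen_interior.smul x⁻¹
    exact this.mem_nhds ⟨x, hx, by simp⟩
  · intro d hd
    obtain ⟨M, hM⟩ := hS d hd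
    -- bound d 1 t for t ∈ T
    have hlen_inv : ∀ g : G, d 1 g⁻¹ = d 1 g := by
      intro g
      rw [hd.symm 1 g, ← hd.left_inv g 1 g⁻¹, mul_one, mul_inv_cancel]
    obtain ⟨C, hC0, hC⟩ : ∃ C : ℝ, 0 ≤ C ∧ ∀ t ∈ T, d 1 t ≤ C := by
      by_cases hSne : S.Nonempty
      · obtain ⟨s₀, hs₀⟩ := hSne
        refine ⟨d 1 s₀ + max M 0, by linarith [hd.nonneg 1 s₀, le_max_right M (0:ℝ)], ?_⟩
        have key : ∀ s ∈ S, d 1 s ≤ d 1 s₀ + max M 0 := by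
          intro s hs
          calc d 1 s ≤ d 1 s₀ + d s₀ s := hd.triangle _ _ _
            _ ≤ d 1 s₀ + max M 0 := by
                exact add_le_add_right (le_trans (hM s₀ hs₀ s hs) (le_max_left _ _)) _
        intro t ht
        rcases ht with (hts | hts) | hts
        · exact key t hts
        · rw [← hlen_inv]
          exact key t⁻¹ hts
        · rw [Set.mem_singleton_iff] at hts
          simp only [hts, hd.self]
          linarith [hd.nonneg 1 s₀, le_max_right M (0:ℝ)]
      · refine ⟨0, le_refl _, ?_⟩
        intro t ht
        rcases ht with (hts | hts) | hts
        · exact absurd ⟨t, hts⟩ hSne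
        · exact absurd ⟨t⁻¹, hts⟩ hSne
        · rw [Set.mem_singleton_iff] at hts
          simp [hts, hd.self]
    -- bound on T^n, hence on its closure
    have hpow : ∀ u ∈ T ^ n, ∀ v ∈ T ^ n, d u v ≤ 2 * (n * C) := by
      intro u hu v hv
      calc d u v ≤ d u 1 + d 1 v := hd.triangle _ _ _
        _ = d 1 u + d 1 v := by rw [hd.symm]
        _ ≤ n * C + n * C := add_le_add (pow_bounded hd hC0 hC n u hu) (pow_bounded hd hC0 hC n v hv)
        _ = 2 * (n * C) := by ring
    have hcl : ∀ u ∈ closure (T ^ n), ∀ v ∈ closure (T ^ n), d u v ≤ 2 * (n * C) := by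
      have hKclosed : IsClosed {p : G × G | d p.1 p.2 ≤ 2 * (n * C)} :=
        isClosed_le hd.continuous continuous_const
      have hsub : (T ^ n) ×ˢ (T ^ n) ⊆ {p : G × G | d p.1 p.2 ≤ 2 * (n * C)} := by
        rintro ⟨u, v⟩ ⟨hu, hv⟩
        exact hpow u hu v hv
      intro u hu v hv
      have : (u, v) ∈ closure ((T ^ n) ×ˢ (T ^ n)) := by
        rw [closure_prod_eq]; exact ⟨hu, hv⟩
      exact hKclosed.closure_subset_iff.2 hsub this
    refine ⟨2 * (n * C), ?_⟩
    rintro a ⟨u, hu, rfl⟩ b ⟨v, hv, rfl⟩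
    have := hcl u (interior_subset hu) v (interior_subset hv)
    simpa [hd.left_inv x⁻¹ u v] using this
end

section
/- Let (G_i)_{i ∈ I} be a family of topological groups and let G = ∏_{i ∈ I} G_i with the product topology. Then G is coarsely bounded in itself (i.e., the set G is a coarsely bounded subset of G) if and only if every G_i is coarsely bounded in itself. -/
open Pointwise

/-- A product of topological groups is coarsely bounded in itself if and only if
every factor is coarsely bounded in itself. -/
theorem pi_isCoarselyBounded_univ_iff {I : Type*} (Gf : I → Type*)
    [∀ i, Group (Gf i)] [∀ i, TopologicalSpace (Gf i)] [∀ i, IsTopologicalGroup (Gf i)] :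
    IsCoarselyBounded (∀ i, Gf i) Set.univ ↔
      ∀ i, IsCoarselyBounded (Gf i) Set.univ := by
  classical
  constructor
  · intro h i d hd
    obtain ⟨M, hM⟩ := h (fun x y => d (x i) (y i))
      { continuous := hd.continuous.comp
          (((continuous_apply i).comp continuous_fst).prodMk
            ((continuous_apply i).comp continuous_snd))
        self := fun x => hd.self _
        symm := fun x y => hd.symm _ _
        nonneg := fun x y => hd.nonneg _ _
        triangle := fun x y z => hd.triangle _ _ _
        left_inv := fun g x y => hd.left_inv _ _ _ }
    refine ⟨M, fun a _ b _ => ?_⟩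
    have := hM (Pi.mulSingle i a) trivial (Pi.mulSingle i b) trivial
    simpa using this
  · intro h d hd
    -- the shift identity
    have hshift : ∀ x y : ∀ i, Gf i, d x (x * y) = d 1 y := by
      intro x y
      have := hd.left_inv x 1 y
      simpa using this
    -- pull back pseudometrics to each factor
    have hdi : ∀ i : I, ∃ M : ℝ, ∀ a b : Gf i,
        d (Pi.mulSingle i a) (Pi.mulSingle i b) ≤ M := by
      intro i
      obtain ⟨M, hM⟩ := h i (fun a b => d (Pi.mulSingle i a) (Pi.mulSingle i b))
        { continuous := hd.continuous.comp
            (((continuous_mulSingle i).comp continuous_fst).prodMk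
              ((continuous_mulSingle i).comp continuous_snd))
          self := fun x => hd.self _
          symm := fun x y => hd.symm _ _
          nonneg := fun x y => hd.nonneg _ _
          triangle := fun x y z => hd.triangle _ _ _
          left_inv := fun g x y => by
            rw [Pi.mulSingle_mul, Pi.mulSingle_mul]
            exact hd.left_inv _ _ _ }
      exact ⟨M, fun a b => hM a trivial b trivial⟩
    choose M hMi using hdi
    -- neighborhood of 1 where d 1 · < 1
    have hcont : Continuous fun g : ∀ i, Gf i => d 1 g :=
      hd.continuous.comp (continuous_const.prodMk continuous_id)
    have hnhds : {g : ∀ i, Gf i | d 1 g < 1} ∈ nhds (1 : ∀ i, Gf i) := by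
      have : Set.Iio (1 : ℝ) ∈ nhds (d (1 : ∀ i, Gf i) 1) := by
        rw [hd.self]
        exact Iio_mem_nhds one_pos
      exact hcont.continuousAt.preimage_mem_nhds this
    rw [nhds_pi, Filter.mem_pi] at hnhds
    obtain ⟨I0, hI0fin, t, ht, hsub⟩ := hnhds
    set F : Finset I := hI0fin.toFinset with hF
    -- key bound on d 1 g for any g
    have key : ∀ g : ∀ i, Gf i, d 1 g ≤ (∑ i ∈ F, M i) + 1 := by
      intro g
      -- truncation of g to a finset of coordinates
      set pF : Finset I → ∀ i, Gf i := fun s j => if j ∈ s then g j else 1 with hpF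
      have hdp : ∀ s : Finset I, d 1 (pF s) ≤ ∑ i ∈ s, M i := by
        intro s
        induction s using Finset.cons_induction with
        | empty =>
          have : pF ∅ = 1 := by funext j; simp [hpF]
          rw [this]
          simpa using le_of_eq (hd.self 1)
        | cons a s ha ih =>
          have hsplit : pF (Finset.cons a s ha) = Pi.mulSingle a (g a) * pF s := by
            funext j
            by_cases hja : j = a
            · subst hja
              simp [hpF, Pi.mulSingle_eq_same, ha]
            · simp [hpF, Pi.mulSingle_eq_of_ne hja, hja]
          rw [hsplit, Finset.sum_cons]
          calc d 1 (Pi.mulSingle a (g a) * pF s)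
              ≤ d 1 (Pi.mulSingle a (g a)) +
                d (Pi.mulSingle a (g a)) (Pi.mulSingle a (g a) * pF s) := hd.triangle _ _ _
            _ ≤ M a + ∑ i ∈ s, M i := by
                refine add_le_add ?_ ?_
                · have := hMi a 1 (g a); simpa using this
                · rw [hshift]; exact ih
      set p : ∀ i, Gf i := pF F with hp
      have hpj : ∀ j, p j = if j ∈ F then g j else 1 := fun j => rfl
      -- the remainder p⁻¹ * g lies in the neighborhood
      have hrem : d 1 (p⁻¹ * g) < 1 := by
        apply hsub
        intro j hj
        have hjF : j ∈ F := hI0fin.mem_toFinset.mpr hj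
        have hval : (p⁻¹ * g) j = 1 := by
          simp [Pi.mul_apply, Pi.inv_apply, hpj j, hjF]
        rw [hval]
        exact mem_of_mem_nhds (ht j)
      calc d 1 g = d 1 (p * (p⁻¹ * g)) := by rw [mul_inv_cancel_left]
        _ ≤ d 1 p + d p (p * (p⁻¹ * g)) := hd.triangle _ _ _
        _ = d 1 p + d 1 (p⁻¹ * g) := by rw [hshift]
        _ ≤ (∑ i ∈ F, M i) + 1 := add_le_add (hdp F) (le_of_lt hrem)
    refine ⟨(∑ i ∈ F, M i) + 1, fun a _ b _ => ?_⟩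
    have hab : d a b = d 1 (a⁻¹ * b) := by
      rw [← hd.left_inv a⁻¹, inv_mul_cancel]
    rw [hab]
    exact key _
end
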